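/- For an integer a \ge 4, one has 2 T(a-2,1,1) - T(1,1,a-2) = 2\zeta(a). -/

import Mathlib

open Filter

/-- The Tornheim double series with natural number exponents. -/
noncomputable def tornheimN (a b c : ℕ) : ℝ :=
  ∑' n : ℕ+, ∑' m : ℕ+,
    1 / (((n : ℕ) : ℝ) ^ a * ((m : ℕ) : ℝ) ^ b * (((n : ℕ) + (m : ℕ) : ℕ) : ℝ) ^ c)

noncomputable def Haux (n : ℕ) : ℝ := ∑ k ∈ Finset.range n, (1:ℝ)/(k+1)

lemma Haux_nonneg (n : ℕ) : 0 ≤ Haux n :=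
  Finset.sum_nonneg fun k _ => by positivity

lemma Haux_le (n : ℕ) : Haux n ≤ n := by
  calc Haux n ≤ ∑ k ∈ Finset.range n, (1:ℝ) := by
        apply Finset.sum_le_sum
        intro k _
        rw [div_le_one (by positivity)]
        have : (0:ℝ) ≤ k := Nat.cast_nonneg k
        linarith
    _ = n := by simp

lemma tele_base (c : ℕ) :
    HasSum (fun m : ℕ => (1:ℝ)/(m+c+1) - 1/(m+c+2)) (1/(c+1)) := by
  have hnn : ∀ m : ℕ, 0 ≤ (1:ℝ)/(m+c+1) - 1/(m+c+2) := by
    intro m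
    rw [sub_nonneg]
    apply one_div_le_one_div_of_le (by positivity)
    linarith
  rw [hasSum_iff_tendsto_nat_of_nonneg hnn]
  have key : ∀ M : ℕ, ∑ i ∈ Finset.range M, ((1:ℝ)/(i+c+1) - 1/(i+c+2))
      = 1/(c+1) - 1/(M+c+1) := by
    intro M
    have h := Finset.sum_range_sub' (f := fun i : ℕ => (1:ℝ)/(i+c+1)) M
    rw [show (1:ℝ)/(c+1) - 1/(M+c+1) = 1/((0:ℕ)+c+1) - 1/(M+c+1) by norm_num, ← h]
    apply Finset.sum_congr rfl
    intro i _
    push_cast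
    ring
  simp only [key]
  have h1 : Tendsto (fun M : ℕ => ((M:ℝ)+c+1)) atTop atTop := by
    apply tendsto_atTop_add_const_right
    apply tendsto_atTop_add_const_right
    exact tendsto_natCast_atTop_atTop
  have h2 := h1.inv_tendsto_atTop
  have h3 : Tendsto (fun M : ℕ => (1:ℝ)/(c+1) - 1/(M+c+1)) atTop (nhds (1/(c+1) - 0)) := by
    apply Tendsto.sub tendsto_const_nhds
    simpa [one_div, Pi.inv_def] using h2
  simpa using h3

lemma tele (n : ℕ) : HasSum (fun m : ℕ => (1:ℝ)/(m+1) - 1/(m+1+n)) (Haux n) := by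
  induction n with
  | zero => simpa [Haux] using hasSum_zero
  | succ n ih =>
    have h := ih.add (tele_base n)
    have heq : (fun m : ℕ => ((1:ℝ)/(m+1) - 1/(m+1+n)) + ((1:ℝ)/(m+n+1) - 1/(m+n+2)))
        = fun m : ℕ => (1:ℝ)/(m+1) - 1/(m+1+((n+1:ℕ):ℝ)) := by
      funext m
      push_cast
      ring
    rw [heq] at h
    have hv : Haux (n+1) = Haux n + 1/(n+1) := by
      simp only [Haux, Finset.sum_range_succ]
    rw [hv]
    exact h

lemma summable_pnat_pow {k : ℕ} (hk : 2 ≤ k) :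
    Summable (fun n : ℕ+ => 1/((n:ℕ):ℝ)^k) :=
  (Real.summable_one_div_nat_pow.mpr (by omega)).comp_injective PNat.coe_injective

lemma summable_prod_sq :
    Summable (fun p : ℕ+ × ℕ+ => 1/((p.1:ℕ):ℝ)^2 * (1/((p.2:ℕ):ℝ)^2)) :=
  by
  apply Summable.mul_of_nonneg (summable_pnat_pow le_rfl) (summable_pnat_pow le_rfl) <;>
    exact fun x => by positivity

lemma pnat_one_le (n : ℕ+) : (1:ℝ) ≤ ((n:ℕ):ℝ) := by
  exact_mod_cast n.one_le

lemma inner1 (b : ℕ) (n : ℕ+) :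
    HasSum (fun m : ℕ+ => 1/(((n:ℕ):ℝ)^b * ((m:ℕ):ℝ) * (((n:ℕ)+(m:ℕ) : ℕ):ℝ)))
      (Haux (n:ℕ) / ((n:ℕ):ℝ)^(b+1)) := by
  rw [← (Equiv.pnatEquivNat.symm).hasSum_iff]
  have hn : (1:ℝ) ≤ ((n:ℕ):ℝ) := pnat_one_le n
  have heq : ((fun m : ℕ+ => 1/(((n:ℕ):ℝ)^b * ((m:ℕ):ℝ) * (((n:ℕ)+(m:ℕ) : ℕ):ℝ)))
        ∘ Equiv.pnatEquivNat.symm)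
      = fun k : ℕ => (1/((n:ℕ):ℝ)^(b+1)) * ((1:ℝ)/(k+1) - 1/(k+1+(n:ℕ))) := by
    funext k
    simp only [Function.comp_apply, Equiv.pnatEquivNat_symm_apply, Nat.succPNat, PNat.mk_coe]
    push_cast
    rw [pow_succ]
    field_simp
    ring
  rw [heq]
  have h := (tele (n:ℕ)).mul_left (1/((n:ℕ):ℝ)^(b+1))
  simpa [div_eq_mul_inv, mul_comm] using h

lemma T1_eq (b : ℕ) :
    tornheimN b 1 1 = ∑' n : ℕ+, Haux (n:ℕ) / ((n:ℕ):ℝ)^(b+1) := by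
  rw [tornheimN]
  apply tsum_congr
  intro n
  simpa [pow_one] using (inner1 b n).tsum_eq

/-- The summand of `tornheimN 1 1 b` as a function on the product. -/
noncomputable def tfun (b : ℕ) (p : ℕ+ × ℕ+) : ℝ :=
  1 / (((p.1:ℕ):ℝ) * ((p.2:ℕ):ℝ) * (((p.1:ℕ)+(p.2:ℕ) : ℕ):ℝ)^b)

noncomputable def ufun (b : ℕ) (p : ℕ+ × ℕ+) : ℝ :=
  1 / (((p.1:ℕ):ℝ) * (((p.1:ℕ)+(p.2:ℕ) : ℕ):ℝ)^(b+1))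

noncomputable def Gfun (b : ℕ) (q : ℕ+ × ℕ+) : ℝ :=
  if (q.2:ℕ) < (q.1:ℕ) then 1 / (((q.2:ℕ):ℝ) * ((q.1:ℕ):ℝ)^(b+1)) else 0

lemma summable_tfun {b : ℕ} (hb : 2 ≤ b) : Summable (tfun b) := by
  apply Summable.of_nonneg_of_le (fun p => by unfold tfun; positivity) _ summable_prod_sq
  intro p
  obtain ⟨n, m⟩ := p
  have hx : (1:ℝ) ≤ ((n:ℕ):ℝ) := pnat_one_le n
  have hy : (1:ℝ) ≤ ((m:ℕ):ℝ) := pnat_one_le m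
  unfold tfun
  push_cast
  set x := ((n:ℕ):ℝ) with hxd
  set y := ((m:ℕ):ℝ) with hyd
  rw [one_div_mul_one_div]
  apply one_div_le_one_div_of_le (by positivity)
  have h2 : (x+y)^2 ≤ (x+y)^b := pow_le_pow_right₀ (by linarith) hb
  have h1 : x*y ≤ (x+y)^2 := by nlinarith
  calc x^2*y^2 = (x*y)*(x*y) := by ring
    _ ≤ (x*y)*((x+y)^2) := by
        apply mul_le_mul_of_nonneg_left h1 (by positivity)
    _ ≤ (x*y)*((x+y)^b) := by
        apply mul_le_mul_of_nonneg_left h2 (by positivity)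
    _ = x*y*(x+y)^b := by ring

lemma summable_ufun {b : ℕ} (hb : 2 ≤ b) : Summable (ufun b) := by
  apply Summable.of_nonneg_of_le (fun p => by unfold ufun; positivity) _ summable_prod_sq
  intro p
  obtain ⟨n, m⟩ := p
  have hx : (1:ℝ) ≤ ((n:ℕ):ℝ) := pnat_one_le n
  have hy : (1:ℝ) ≤ ((m:ℕ):ℝ) := pnat_one_le m
  unfold ufun
  push_cast
  set x := ((n:ℕ):ℝ) with hxd
  set y := ((m:ℕ):ℝ) with hyd
  rw [one_div_mul_one_div]
  apply one_div_le_one_div_of_le (by positivity)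
  have h3 : (x+y)^3 ≤ (x+y)^(b+1) := pow_le_pow_right₀ (by linarith) (by omega)
  have hx0 : (0:ℝ) ≤ x := by linarith
  have hy0 : (0:ℝ) ≤ y := by linarith
  have h1 : x*y^2 ≤ (x+y)^3 := by
    nlinarith [mul_nonneg (mul_nonneg hx0 hx0) hx0, mul_nonneg (mul_nonneg hx0 hx0) hy0,
      mul_nonneg (mul_nonneg hx0 hy0) hy0, mul_nonneg (mul_nonneg hy0 hy0) hy0]
  calc x^2*y^2 = x*(x*y^2) := by ring
    _ ≤ x*((x+y)^3) := by
        apply mul_le_mul_of_nonneg_left h1 (by positivity)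
    _ ≤ x*((x+y)^(b+1)) := by
        apply mul_le_mul_of_nonneg_left h3 (by positivity)
    _ = x*(x+y)^(b+1) := by ring

lemma summable_Gfun {b : ℕ} (hb : 2 ≤ b) : Summable (Gfun b) := by
  apply Summable.of_nonneg_of_le
    (fun p => by unfold Gfun; split <;> positivity) _ summable_prod_sq
  intro p
  obtain ⟨N, n⟩ := p
  have hx : (1:ℝ) ≤ ((N:ℕ):ℝ) := pnat_one_le N
  have hy : (1:ℝ) ≤ ((n:ℕ):ℝ) := pnat_one_le n
  unfold Gfun
  split
  · rename_i hlt
    have hyx : ((n:ℕ):ℝ) ≤ ((N:ℕ):ℝ) := by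
      simp only at hlt
      exact_mod_cast hlt.le
    push_cast
    set x := ((N:ℕ):ℝ) with hxd
    set y := ((n:ℕ):ℝ) with hyd
    rw [one_div_mul_one_div]
    apply one_div_le_one_div_of_le (by positivity)
    have h3 : x^3 ≤ x^(b+1) := pow_le_pow_right₀ (by linarith) (by omega)
    calc x^2*y^2 = y*(x^2*y) := by ring
      _ ≤ y*(x^2*x) := by
          apply mul_le_mul_of_nonneg_left _ (by positivity)
          apply mul_le_mul_of_nonneg_left hyx (by positivity)
      _ = y*x^3 := by ring
      _ ≤ y*x^(b+1) := by
          apply mul_le_mul_of_nonneg_left h3 (by positivity)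
  · positivity

lemma tfun_eq_add (b : ℕ) (p : ℕ+ × ℕ+) :
    tfun b p = ufun b p + ufun b p.swap := by
  obtain ⟨n, m⟩ := p
  have hx : (1:ℝ) ≤ ((n:ℕ):ℝ) := pnat_one_le n
  have hy : (1:ℝ) ≤ ((m:ℕ):ℝ) := pnat_one_le m
  unfold tfun ufun
  simp only [Prod.swap_prod_mk]
  push_cast
  set x := ((n:ℕ):ℝ) with hxd
  set y := ((m:ℕ):ℝ) with hyd
  have hx0 : (0:ℝ) < x := by linarith
  have hy0 : (0:ℝ) < y := by linarith
  have hxy : (0:ℝ) < x + y := by linarith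
  rw [pow_succ, pow_succ]
  rw [div_add_div _ _ (by positivity) (by positivity)]
  rw [div_eq_div_iff (by positivity) (by positivity)]
  ring

lemma T2_eq {b : ℕ} (hb : 2 ≤ b) :
    tornheimN 1 1 b = 2 * ∑' q : ℕ+ × ℕ+, Gfun b q := by
  have h1 : tornheimN 1 1 b = ∑' p : ℕ+ × ℕ+, tfun b p := by
    rw [tornheimN, Summable.tsum_prod' (summable_tfun hb) (fun n => (summable_tfun hb).prod_factor n)]
    apply tsum_congr; intro n; apply tsum_congr; intro m
    simp [tfun, pow_one]
  have hswap : Summable (fun p : ℕ+ × ℕ+ => ufun b p.swap) :=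
    (Equiv.prodComm ℕ+ ℕ+).summable_iff.mpr (summable_ufun hb)
  have h2 : ∑' p : ℕ+ × ℕ+, tfun b p
      = (∑' p : ℕ+ × ℕ+, ufun b p) + ∑' p : ℕ+ × ℕ+, ufun b p.swap := by
    rw [← Summable.tsum_add (summable_ufun hb) hswap]
    exact tsum_congr (tfun_eq_add b)
  have h3 : ∑' p : ℕ+ × ℕ+, ufun b p.swap = ∑' p : ℕ+ × ℕ+, ufun b p :=
    (Equiv.prodComm ℕ+ ℕ+).tsum_eq (ufun b)
  have h4 : ∑' p : ℕ+ × ℕ+, ufun b p = ∑' q : ℕ+ × ℕ+, Gfun b q := by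
    have hφ : Function.Injective (fun p : ℕ+ × ℕ+ => ((p.1 + p.2, p.1) : ℕ+ × ℕ+)) := by
      intro p q h
      obtain ⟨h1, h2⟩ := Prod.ext_iff.1 h
      simp only at h1 h2
      refine Prod.ext h2 ?_
      rwa [h2, add_right_inj] at h1
    have hsupp : Function.support (Gfun b)
        ⊆ Set.range (fun p : ℕ+ × ℕ+ => ((p.1 + p.2, p.1) : ℕ+ × ℕ+)) := by
      intro q hq
      have hlt : (q.2:ℕ) < (q.1:ℕ) := by
        by_contra h
        exact hq (by simp [Gfun, h])
      refine ⟨(q.2, ⟨(q.1:ℕ) - (q.2:ℕ), by omega⟩), ?_⟩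
      refine Prod.ext ?_ rfl
      apply PNat.coe_injective
      simp only [PNat.add_coe, PNat.mk_coe]
      change ((q.2:ℕ) + ((q.1:ℕ) - (q.2:ℕ))) = (q.1:ℕ)
      omega
    rw [← hφ.tsum_eq hsupp]
    apply tsum_congr
    intro p
    refine Eq.symm ?_
    show Gfun b (p.1 + p.2, p.1) = ufun b p
    unfold Gfun ufun
    rw [if_pos]
    · simp only [PNat.add_coe]
    · simp only [PNat.add_coe]
      exact Nat.lt_add_of_pos_right p.2.pos
  rw [h1, h2, h3, h4]
  ring

lemma tsum_Gfun {b : ℕ} (hb : 2 ≤ b) :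
    ∑' q : ℕ+ × ℕ+, Gfun b q
      = ∑' N : ℕ+, Haux ((N:ℕ)-1) / ((N:ℕ):ℝ)^(b+1) := by
  rw [Summable.tsum_prod' (summable_Gfun hb) (fun n => (summable_Gfun hb).prod_factor n)]
  apply tsum_congr
  intro N
  rw [← Equiv.pnatEquivNat.symm.tsum_eq (fun n => Gfun b (N, n))]
  have hvanish : ∀ k ∉ Finset.range ((N:ℕ)-1),
      Gfun b (N, Equiv.pnatEquivNat.symm k) = 0 := by
    intro k hk
    simp only [Finset.mem_range] at hk
    have hcond : ¬ ((Equiv.pnatEquivNat.symm k : ℕ+) : ℕ) < (N:ℕ) := by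
      simp only [Equiv.pnatEquivNat_symm_apply, Nat.succPNat_coe]
      omega
    simp only [Gfun, if_neg hcond]
  rw [tsum_eq_sum hvanish, Haux, Finset.sum_div]
  apply Finset.sum_congr rfl
  intro k hk
  simp only [Finset.mem_range] at hk
  have hlt : ((Equiv.pnatEquivNat.symm k : ℕ+) : ℕ) < (N:ℕ) := by
    simp only [Equiv.pnatEquivNat_symm_apply, Nat.succPNat_coe]
    omega
  simp only [Gfun, Equiv.pnatEquivNat_symm_apply, Nat.succPNat_coe]
  rw [if_pos (show Nat.succ k < (N:ℕ) by omega)]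
  push_cast
  rw [div_div]

lemma summable_H1 {b : ℕ} (hb : 2 ≤ b) :
    Summable (fun N : ℕ+ => Haux (N:ℕ) / ((N:ℕ):ℝ)^(b+1)) := by
  apply Summable.of_nonneg_of_le
    (fun N => div_nonneg (Haux_nonneg _) (by positivity)) _ (summable_pnat_pow hb)
  intro N
  have hx : (1:ℝ) ≤ ((N:ℕ):ℝ) := pnat_one_le N
  rw [div_le_iff₀ (by positivity)]
  have h : (1:ℝ)/((N:ℕ):ℝ)^b * ((N:ℕ):ℝ)^(b+1) = ((N:ℕ):ℝ) := by
    rw [pow_succ]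
    field_simp
  rw [h]
  exact Haux_le _

lemma summable_H2 {b : ℕ} (hb : 2 ≤ b) :
    Summable (fun N : ℕ+ => Haux ((N:ℕ)-1) / ((N:ℕ):ℝ)^(b+1)) := by
  apply Summable.of_nonneg_of_le
    (fun N => div_nonneg (Haux_nonneg _) (by positivity)) _ (summable_pnat_pow hb)
  intro N
  have hx : (1:ℝ) ≤ ((N:ℕ):ℝ) := pnat_one_le N
  rw [div_le_iff₀ (by positivity)]
  have h : (1:ℝ)/((N:ℕ):ℝ)^b * ((N:ℕ):ℝ)^(b+1) = ((N:ℕ):ℝ) := by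
    rw [pow_succ]
    field_simp
  rw [h]
  refine (Haux_le _).trans ?_
  exact_mod_cast Nat.sub_le _ _

lemma key_real {b : ℕ} (hb : 2 ≤ b) :
    2 * tornheimN b 1 1 - tornheimN 1 1 b
      = 2 * ∑' N : ℕ+, 1/((N:ℕ):ℝ)^(b+2) := by
  rw [T1_eq, T2_eq hb, tsum_Gfun hb, ← mul_sub,
    ← Summable.tsum_sub (summable_H1 hb) (summable_H2 hb)]
  congr 1
  apply tsum_congr
  intro N
  have hN : 1 ≤ (N:ℕ) := N.one_le
  have hx : (1:ℝ) ≤ ((N:ℕ):ℝ) := pnat_one_le N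
  have hH : Haux (N:ℕ) = Haux ((N:ℕ)-1) + 1/((N:ℕ):ℝ) := by
    conv_lhs => rw [show (N:ℕ) = ((N:ℕ)-1)+1 by omega]
    simp only [Haux, Finset.sum_range_succ]
    congr 1
    rw [Nat.cast_sub hN]
    push_cast
    ring_nf
  rw [hH, add_div, add_sub_cancel_left, div_div, ← pow_succ']

theorem tornheim_two_rel (a : ℕ) (ha : 4 ≤ a) :
    ((2 * tornheimN (a - 2) 1 1 - tornheimN 1 1 (a - 2) : ℝ) : ℂ)
      = 2 * riemannZeta a := by
  obtain ⟨b, rfl⟩ : ∃ b, a = b + 2 := ⟨a - 2, by omega⟩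
  have hb : 2 ≤ b := by omega
  have h2 : (b + 2) - 2 = b := by omega
  have hz : ((∑' N : ℕ+, 1/((N:ℕ):ℝ)^(b+2) : ℝ) : ℂ) = riemannZeta ((b+2 : ℕ) : ℂ) := by
    rw [zeta_eq_tsum_one_div_nat_add_one_cpow
      (by simp only [Complex.natCast_re]; exact_mod_cast (by omega : 1 < b+2))]
    rw [Complex.ofReal_tsum]
    rw [← Equiv.pnatEquivNat.symm.tsum_eq
      (fun N : ℕ+ => ((1/((N:ℕ):ℝ)^(b+2) : ℝ) : ℂ))]
    apply tsum_congr
    intro k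
    simp only [Equiv.pnatEquivNat_symm_apply, Nat.succPNat_coe]
    rw [Complex.cpow_natCast]
    push_cast
    ring
  rw [h2, key_real hb, Complex.ofReal_mul]
  rw [hz]
  norm_num
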